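/- Let C be an invertible dX × dX real matrix, Hx a dY × dX matrix with V = Hx C Hx* invertible, and S = [[C, (1/2) C Hx*], [(1/2) Hx C, (1/3) V]]. Then for every a ∈ ℝ^{dX}, the quadratic form of S^{-1} at the vector (a, (1/2) Hx a) equals a* C^{-1} a. -/

import Mathlib

open Matrix

theorem quadratic_form_drift
    (dY dX : ℕ) (C : Matrix (Fin dX) (Fin dX) ℝ)
    (Hx : Matrix (Fin dY) (Fin dX) ℝ)
    (hC : IsUnit C.det) (hV : IsUnit (Hx * C * Hxᵀ).det)
    (a : Fin dX → ℝ) :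
    let V : Matrix (Fin dY) (Fin dY) ℝ := Hx * C * Hxᵀ
    let S : Matrix (Fin dX ⊕ Fin dY) (Fin dX ⊕ Fin dY) ℝ :=
      Matrix.fromBlocks C ((1/2 : ℝ) • (C * Hxᵀ)) ((1/2 : ℝ) • (Hx * C)) ((1/3 : ℝ) • V)
    let w : (Fin dX ⊕ Fin dY) → ℝ := Sum.elim a ((1/2 : ℝ) • Hx.mulVec a)
    w ⬝ᵥ S⁻¹.mulVec w = a ⬝ᵥ C⁻¹.mulVec a := by
  intro V S w
  haveI : Invertible C := C.invertibleOfIsUnitDet hC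
  -- Schur complement computation
  have h1 : ((1/3 : ℝ) • V) - ((1/2 : ℝ) • (Hx * C)) * C⁻¹ * ((1/2 : ℝ) • (C * Hxᵀ))
      = (1/12 : ℝ) • V := by
    have h2 : ((1/2 : ℝ) • (Hx * C)) * C⁻¹ * ((1/2 : ℝ) • (C * Hxᵀ))
        = (1/4 : ℝ) • V := by
      rw [Matrix.smul_mul, Matrix.smul_mul, Matrix.mul_smul, smul_smul,
        Matrix.mul_nonsing_inv_cancel_right _ _ hC, ← Matrix.mul_assoc]
      norm_num
      rfl
    rw [h2, ← sub_smul]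
    norm_num
  -- S is invertible
  have hS : IsUnit S.det := by
    rw [Matrix.det_fromBlocks₁₁, Matrix.invOf_eq_nonsing_inv, h1]
    apply hC.mul
    rw [Matrix.det_smul]
    exact (IsUnit.pow _ (isUnit_iff_ne_zero.mpr (by norm_num))).mul hV
  -- the preimage vector
  set u : (Fin dX ⊕ Fin dY) → ℝ := Sum.elim (C⁻¹.mulVec a) 0 with hu
  have hSu : S.mulVec u = w := by
    rw [hu, Matrix.fromBlocks_mulVec]
    have t1 : C.mulVec (C⁻¹.mulVec a) = a := by
      rw [Matrix.mulVec_mulVec, Matrix.mul_nonsing_inv _ hC, Matrix.one_mulVec]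
    have t2 : ((1/2 : ℝ) • (Hx * C)).mulVec (C⁻¹.mulVec a)
        = (1/2 : ℝ) • Hx.mulVec a := by
      rw [Matrix.smul_mulVec, Matrix.mulVec_mulVec,
        Matrix.mul_nonsing_inv_cancel_right _ _ hC]
    simp [t1, t2, w, Matrix.smul_mulVec]
  have hinv : S⁻¹.mulVec w = u := by
    rw [← hSu, Matrix.mulVec_mulVec, Matrix.nonsing_inv_mul _ hS, Matrix.one_mulVec]
  rw [hinv, hu]
  simp [w, dotProduct, Fintype.sum_sum_type]
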